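/- Let U ⊆ (0,∞) × ℝ be an open convex set and let P, Θ : U → ℝ be C¹ functions of (ρ,s) satisfying the Lagrangian condition (∂P/∂s)(ρ,s) = ρ²·(∂Θ/∂ρ)(ρ,s) on U. Then there exists a C² function ε : U → ℝ with ∂ε/∂s = Θ and ∂ε/∂ρ = P/ρ² on U; that is, every Lagrangian thermodynamic state satisfies the first law of thermodynamics dε = T ds + p ρ⁻² dρ for some specific energy ε. -/

import Mathlib

/-- Partial derivative with respect to the first variable (the density `ρ`). -/
noncomputable def pderivR (f : ℝ → ℝ → ℝ) (r s : ℝ) : ℝ := deriv (fun x => f x s) r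

/-- Partial derivative with respect to the second variable (the entropy `s`). -/
noncomputable def pderivS (f : ℝ → ℝ → ℝ) (r s : ℝ) : ℝ := deriv (fun y => f r y) s

set_option maxHeartbeats 1000000
open Metric Set Topology

noncomputable def dotL : (ℝ × ℝ) →L[ℝ] (ℝ × ℝ) →L[ℝ] ℝ :=
  LinearMap.toContinuousLinearMap
  { toFun := fun w => w.1 • ContinuousLinearMap.fst ℝ ℝ ℝ + w.2 • ContinuousLinearMap.snd ℝ ℝ ℝ
    map_add' := fun a b => by ext <;> simp
    map_smul' := fun a b => by ext <;> simp }

@[simp] lemma dotL_apply (w v : ℝ × ℝ) : dotL w v = w.1 * v.1 + w.2 * v.2 := by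
  simp [dotL, LinearMap.toContinuousLinearMap]

lemma dot_symm (D : (ℝ × ℝ) →L[ℝ] ℝ × ℝ) (h : (D (1,0)).2 = (D (0,1)).1) (v w : ℝ × ℝ) :
    dotL (D v) w = dotL (D w) v := by
  have key : ∀ u : ℝ × ℝ, D u = u.1 • D (1,0) + u.2 • D (0,1) := by
    intro u
    rw [← D.map_smul, ← D.map_smul, ← D.map_add]
    congr 1
    ext <;> simp
  rw [key v, key w]
  simp only [dotL_apply, Prod.fst_add, Prod.snd_add, Prod.smul_fst, Prod.smul_snd, smul_eq_mul]
  linear_combination (v.1 * w.2 - v.2 * w.1) * h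

lemma poincare {U : Set (ℝ × ℝ)} (hU : IsOpen U) (hconv : Convex ℝ U) {F : ℝ × ℝ → ℝ × ℝ}
    (hF : ContDiffOn ℝ 1 F U)
    (hsym : ∀ q ∈ U, ((fderiv ℝ F q) (1,0)).2 = ((fderiv ℝ F q) (0,1)).1)
    {c : ℝ × ℝ} (hc : c ∈ U) {q : ℝ × ℝ} (hq : q ∈ U) :
    HasFDerivAt (fun x => ∫ t in (0:ℝ)..1, dotL (F (c + t • (x - c))) (x - c))
      (dotL (F q)) q := by
  have hFd : ∀ y ∈ U, HasFDerivAt F (fderiv ℝ F y) y := fun y hy =>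
    ((hF.contDiffAt (hU.mem_nhds hy)).differentiableAt one_ne_zero).hasFDerivAt
  have hFcont : ContinuousOn F U := hF.continuousOn
  have hDFcont : ContinuousOn (fderiv ℝ F) U := hF.continuousOn_fderiv_of_isOpen hU le_rfl
  have hseg : segment ℝ c q ⊆ U := hconv.segment_subset hc hq
  have hsegcompact : IsCompact (segment ℝ c q) := by
    rw [segment_eq_image']
    exact isCompact_Icc.image (by continuity)
  obtain ⟨δ, hδpos, hδsub⟩ := hsegcompact.exists_cthickening_subset_open hU hseg
  set K := cthickening δ (segment ℝ c q) with hKdef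
  have hKU : K ⊆ U := hδsub
  have hK : IsCompact K := hsegcompact.cthickening
  -- membership of the deformed segment in K
  have hγseg : ∀ t ∈ Icc (0:ℝ) 1, c + t • (q - c) ∈ segment ℝ c q := by
    intro t ht
    rw [segment_eq_image']
    exact ⟨t, ht, rfl⟩
  have hγmem : ∀ x ∈ ball q δ, ∀ t ∈ Icc (0:ℝ) 1, c + t • (x - c) ∈ K := by
    intro x hx t ht
    apply mem_cthickening_of_dist_le _ (c + t • (q - c)) δ _ (hγseg t ht)
    rw [dist_eq_norm]
    have : c + t • (x - c) - (c + t • (q - c)) = t • (x - q) := by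
      simp only [smul_sub]; abel
    rw [this, norm_smul]
    calc ‖t‖ * ‖x - q‖ ≤ 1 * ‖x - q‖ := by
          apply mul_le_mul_of_nonneg_right _ (norm_nonneg _)
          rw [Real.norm_eq_abs, abs_of_nonneg ht.1]; exact ht.2
      _ ≤ δ := by rw [one_mul, ← dist_eq_norm]; exact (mem_ball.1 hx).le
  have hqK : ∀ t ∈ Icc (0:ℝ) 1, c + t • (q - c) ∈ K :=
    fun t ht => hγmem q (mem_ball_self hδpos) t ht
  -- bounds
  obtain ⟨M₁, hM₁⟩ := hK.exists_bound_of_continuousOn (hFcont.mono hKU)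
  obtain ⟨M₂, hM₂⟩ := hK.exists_bound_of_continuousOn (hDFcont.mono hKU)
  set M := max (max M₁ M₂) 0 with hMdef
  have hM0 : 0 ≤ M := le_max_right _ _
  have hMF : ∀ y ∈ K, ‖F y‖ ≤ M := fun y hy =>
    (hM₁ y hy).trans ((le_max_left _ _).trans (le_max_left _ _))
  have hMDF : ∀ y ∈ K, ‖fderiv ℝ F y‖ ≤ M := fun y hy =>
    (hM₂ y hy).trans ((le_max_right _ _).trans (le_max_left _ _))
  -- the derivative candidate
  set F' : (ℝ × ℝ) → ℝ → ((ℝ × ℝ) →L[ℝ] ℝ) := fun x t =>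
    t • ((dotL.flip (x - c)).comp (fderiv ℝ F (c + t • (x - c)))) + dotL (F (c + t • (x - c)))
    with hF'def
  have hsub : uIoc (0:ℝ) 1 ⊆ Icc (0:ℝ) 1 := by
    rw [uIoc_of_le (zero_le_one)]; exact Ioc_subset_Icc_self
  -- continuity in t of the relevant maps, for x in the ball
  have hγcont : ∀ x : ℝ × ℝ, Continuous (fun t : ℝ => c + t • (x - c)) := fun x =>
    continuous_const.add (continuous_id.smul continuous_const)
  have hFγcont : ∀ x ∈ ball q δ, ContinuousOn (fun t => F (c + t • (x - c))) (Icc (0:ℝ) 1) := by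
    intro x hx
    exact (hFcont.mono hKU).comp ((hγcont x).continuousOn) (fun t ht => hγmem x hx t ht)
  have hDFγcont : ∀ x ∈ ball q δ,
      ContinuousOn (fun t => fderiv ℝ F (c + t • (x - c))) (Icc (0:ℝ) 1) := by
    intro x hx
    exact (hDFcont.mono hKU).comp ((hγcont x).continuousOn) (fun t ht => hγmem x hx t ht)
  -- differentiation under the integral sign
  have key := intervalIntegral.hasFDerivAt_integral_of_dominated_of_fderiv_le
    (μ := MeasureTheory.volume) (F := fun x t => dotL (F (c + t • (x - c))) (x - c))
    (F' := F') (x₀ := q) (a := 0) (b := 1)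
    (bound := fun _ => ‖dotL‖ * M * (‖q - c‖ + δ) + ‖dotL‖ * M) (ball_mem_nhds q hδpos)
    ?meas ?int ?meas' ?bnd ?bint ?diff
  case meas =>
    filter_upwards [ball_mem_nhds q hδpos] with x hx
    exact (((dotL.continuous.comp_continuousOn (hFγcont x hx)).clm_apply
      continuousOn_const).mono hsub).aestronglyMeasurable measurableSet_uIoc
  case int =>
    apply ContinuousOn.intervalIntegrable
    rw [uIcc_of_le zero_le_one]
    exact (dotL.continuous.comp_continuousOn
      (hFγcont q (mem_ball_self hδpos))).clm_apply continuousOn_const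
  case meas' =>
    apply ContinuousOn.aestronglyMeasurable _ measurableSet_uIoc
    apply ContinuousOn.mono _ hsub
    apply ContinuousOn.add
    · exact continuousOn_id.smul
        ((continuousOn_const.clm_comp (hDFγcont q (mem_ball_self hδpos))))
    · exact (dotL.continuous.comp_continuousOn (hFγcont q (mem_ball_self hδpos)))
  case bnd =>
    apply MeasureTheory.ae_of_all
    intro t ht x hx
    have htI : t ∈ Icc (0:ℝ) 1 := hsub ht
    have hxK := hγmem x hx t htI
    have hxc : ‖x - c‖ ≤ ‖q - c‖ + δ := by
      calc ‖x - c‖ = ‖(q - c) + (x - q)‖ := by congr 1; abel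
        _ ≤ ‖q - c‖ + ‖x - q‖ := norm_add_le _ _
        _ ≤ ‖q - c‖ + δ := by
            gcongr
            rw [← dist_eq_norm]; exact (mem_ball.1 hx).le
    have hflip : ‖dotL.flip (x - c)‖ ≤ ‖dotL‖ * ‖x - c‖ := by
      simpa [ContinuousLinearMap.opNorm_flip] using dotL.flip.le_opNorm (x - c)
    have hA : ‖t • ((dotL.flip (x - c)).comp (fderiv ℝ F (c + t • (x - c))))‖ ≤
        ‖dotL‖ * M * (‖q - c‖ + δ) := by
      have hns : ‖t • ((dotL.flip (x - c)).comp (fderiv ℝ F (c + t • (x - c))))‖ =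
          t * ‖(dotL.flip (x - c)).comp (fderiv ℝ F (c + t • (x - c)))‖ :=
        (norm_smul t ((dotL.flip (x - c)).comp (fderiv ℝ F (c + t • (x - c))))).trans
          (by rw [Real.norm_eq_abs, abs_of_nonneg htI.1])
      rw [hns]
      have h1 : ‖(dotL.flip (x - c)).comp (fderiv ℝ F (c + t • (x - c)))‖ ≤
          (‖dotL‖ * ‖x - c‖) * M := by
        refine (ContinuousLinearMap.opNorm_comp_le _ _).trans ?_
        exact mul_le_mul hflip (hMDF _ hxK) (norm_nonneg _) (by positivity)
      have h2 : t * ‖(dotL.flip (x - c)).comp (fderiv ℝ F (c + t • (x - c)))‖ ≤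
          (‖dotL‖ * ‖x - c‖) * M := by
        calc t * _ ≤ 1 * ((‖dotL‖ * ‖x - c‖) * M) := by
              apply mul_le_mul htI.2 h1 (norm_nonneg _) zero_le_one
          _ = (‖dotL‖ * ‖x - c‖) * M := one_mul _
      refine h2.trans ?_
      rw [show ‖dotL‖ * ‖x - c‖ * M = ‖dotL‖ * M * ‖x - c‖ from by ring]
      exact mul_le_mul_of_nonneg_left hxc (by positivity)
    have hB : ‖dotL (F (c + t • (x - c)))‖ ≤ ‖dotL‖ * M :=
      (dotL.le_opNorm _).trans (mul_le_mul_of_nonneg_left (hMF _ hxK) (norm_nonneg _))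
    exact (norm_add_le _ _).trans (add_le_add hA hB)
  case bint => exact intervalIntegrable_const
  case diff =>
    apply MeasureTheory.ae_of_all
    intro t ht x hx
    have htI : t ∈ Icc (0:ℝ) 1 := hsub ht
    have hxU : c + t • (x - c) ∈ U := hKU (hγmem x hx t htI)
    have h1 : HasFDerivAt (fun x : ℝ × ℝ => c + t • (x - c))
        (t • ContinuousLinearMap.id ℝ (ℝ × ℝ)) x := by
      have h0 : HasFDerivAt (fun x : ℝ × ℝ => x - c) (ContinuousLinearMap.id ℝ (ℝ × ℝ)) x :=
        (hasFDerivAt_id x).sub_const c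
      have := (h0.const_smul t).const_add c
      simpa using this
    have h3 : HasFDerivAt (fun x => F (c + t • (x - c)))
        ((fderiv ℝ F (c + t • (x - c))).comp (t • ContinuousLinearMap.id ℝ (ℝ × ℝ))) x :=
      (hFd _ hxU).comp x h1
    have h4 : HasFDerivAt (fun x => dotL (F (c + t • (x - c))))
        (dotL.comp ((fderiv ℝ F (c + t • (x - c))).comp (t • ContinuousLinearMap.id ℝ (ℝ × ℝ)))) x :=
      (dotL.hasFDerivAt).comp x h3
    have h5 : HasFDerivAt (fun x : ℝ × ℝ => x - c) (ContinuousLinearMap.id ℝ (ℝ × ℝ)) x :=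
      (hasFDerivAt_id x).sub_const c
    have h6 := h4.clm_apply h5
    have heq : F' x t = (dotL (F (c + t • (x - c)))).comp (ContinuousLinearMap.id ℝ (ℝ × ℝ)) +
        (dotL.comp ((fderiv ℝ F (c + t • (x - c))).comp
          (t • ContinuousLinearMap.id ℝ (ℝ × ℝ)))).flip (x - c) := by
      refine ContinuousLinearMap.ext fun v => ?_
      simp only [hF'def, ContinuousLinearMap.add_apply, ContinuousLinearMap.coe_comp',
        Function.comp_apply, ContinuousLinearMap.flip_apply, ContinuousLinearMap.smul_apply,
        ContinuousLinearMap.coe_id', id_eq, ContinuousLinearMap.map_smul, smul_eq_mul,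
        dotL_apply, Prod.smul_fst, Prod.smul_snd]
      ring
    rw [heq]
    exact h6
  -- now compute the integral of F' q
  have hγq : ∀ t ∈ Icc (0:ℝ) 1, c + t • (q - c) ∈ U := fun t ht => hKU (hqK t ht)
  have hF'int : IntervalIntegrable (F' q) MeasureTheory.volume 0 1 := by
    apply ContinuousOn.intervalIntegrable
    rw [uIcc_of_le zero_le_one]
    apply ContinuousOn.add
    · exact continuousOn_id.smul (continuousOn_const.clm_comp (hDFγcont q (mem_ball_self hδpos)))
    · exact dotL.continuous.comp_continuousOn (hFγcont q (mem_ball_self hδpos))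
  have hint : (∫ t in (0:ℝ)..1, F' q t) = dotL (F q) := by
    refine ContinuousLinearMap.ext fun v => ?_
    have happly : (∫ t in (0:ℝ)..1, F' q t) v = ∫ t in (0:ℝ)..1, F' q t v := by
      rw [intervalIntegral.integral_of_le zero_le_one,
        intervalIntegral.integral_of_le zero_le_one]
      exact ContinuousLinearMap.integral_apply
        ((intervalIntegrable_iff_integrableOn_Ioc_of_le zero_le_one).1 hF'int) v
    have hg : ∀ t ∈ uIcc (0:ℝ) 1, HasDerivAt (fun t => t * dotL (F (c + t • (q - c))) v)
        (dotL (F (c + t • (q - c))) v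
          + t * dotL ((fderiv ℝ F (c + t • (q - c))) (q - c)) v) t := by
      intro t ht
      rw [uIcc_of_le zero_le_one] at ht
      have hγd : HasDerivAt (fun t : ℝ => c + t • (q - c)) (q - c) t := by
        have := ((hasDerivAt_id t).smul_const (q - c)).const_add c
        simpa using this
      have hFγ : HasDerivAt (fun t => F (c + t • (q - c)))
          ((fderiv ℝ F (c + t • (q - c))) (q - c)) t :=
        (hFd _ (hγq t ht)).comp_hasDerivAt t hγd
      have happ : HasDerivAt (fun t => dotL (F (c + t • (q - c))) v)
          (dotL ((fderiv ℝ F (c + t • (q - c))) (q - c)) v) t := by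
        have := (dotL.flip v).hasFDerivAt.comp_hasDerivAt t hFγ
        exact this
      have := (hasDerivAt_id' (x := t)).mul happ
      exact this.congr_deriv (by simp)
    have heq : EqOn (fun t => F' q t v)
        (fun t => dotL (F (c + t • (q - c))) v
          + t * dotL ((fderiv ℝ F (c + t • (q - c))) (q - c)) v) (uIcc (0:ℝ) 1) := by
      intro t ht
      rw [uIcc_of_le zero_le_one] at ht
      have hsymt := dot_symm (fderiv ℝ F (c + t • (q - c))) (hsym _ (hγq t ht)) v (q - c)
      simp only [hF'def, ContinuousLinearMap.add_apply, ContinuousLinearMap.smul_apply,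
        ContinuousLinearMap.coe_comp', Function.comp_apply, ContinuousLinearMap.flip_apply,
        smul_eq_mul]
      rw [hsymt]
      ring
    have hg'int : IntervalIntegrable (fun t => dotL (F (c + t • (q - c))) v
        + t * dotL ((fderiv ℝ F (c + t • (q - c))) (q - c)) v) MeasureTheory.volume 0 1 := by
      apply ContinuousOn.intervalIntegrable
      rw [uIcc_of_le zero_le_one]
      apply ContinuousOn.add
      · exact (dotL.continuous.comp_continuousOn
          (hFγcont q (mem_ball_self hδpos))).clm_apply continuousOn_const
      · exact continuousOn_id.mul ((dotL.continuous.comp_continuousOn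
          ((hDFγcont q (mem_ball_self hδpos)).clm_apply
            continuousOn_const)).clm_apply continuousOn_const)
    calc (∫ t in (0:ℝ)..1, F' q t) v = ∫ t in (0:ℝ)..1, F' q t v := happly
      _ = ∫ t in (0:ℝ)..1, (dotL (F (c + t • (q - c))) v
          + t * dotL ((fderiv ℝ F (c + t • (q - c))) (q - c)) v) :=
        intervalIntegral.integral_congr heq
      _ = (fun t : ℝ => t * dotL (F (c + t • (q - c))) v) 1
          - (fun t : ℝ => t * dotL (F (c + t • (q - c))) v) 0 :=
        intervalIntegral.integral_eq_sub_of_hasDerivAt hg hg'int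
      _ = dotL (F q) v := by simp
  rw [hint] at key
  exact key

/-- On an open convex set `U ⊆ (0,∞) × ℝ`, a Lagrangian thermodynamic state
`p = P(ρ,s)`, `T = Θ(ρ,s)` (i.e. `P_s = ρ²Θ_ρ`) admits a C² specific energy `ε` with
`ε_s = Θ` and `ε_ρ = P/ρ²`: the first law `dε = T ds + p ρ⁻² dρ` holds. -/
theorem stmt_2 (U : Set (ℝ × ℝ)) (hU : IsOpen U) (hconv : Convex ℝ U)
    (hUsub : U ⊆ {q : ℝ × ℝ | 0 < q.1})
    (P Θ : ℝ → ℝ → ℝ)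
    (hP : ContDiffOn ℝ 1 (Function.uncurry P) U)
    (hΘ : ContDiffOn ℝ 1 (Function.uncurry Θ) U)
    (hLag : ∀ q ∈ U, pderivS P q.1 q.2 = q.1 ^ 2 * pderivR Θ q.1 q.2) :
    ∃ ε : ℝ → ℝ → ℝ, ContDiffOn ℝ 2 (Function.uncurry ε) U ∧
      ∀ q ∈ U, pderivS ε q.1 q.2 = Θ q.1 q.2 ∧
        pderivR ε q.1 q.2 = P q.1 q.2 / q.1 ^ 2 := by
  classical
  rcases U.eq_empty_or_nonempty with hUe | ⟨c, hc⟩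
  · subst hUe
    exact ⟨fun _ _ => 0, fun x hx => absurd hx (Set.notMem_empty x), fun q hq => absurd hq (Set.notMem_empty q)⟩
  set F : ℝ × ℝ → ℝ × ℝ :=
    fun y => if y ∈ U then (P y.1 y.2 / y.1 ^ 2, Θ y.1 y.2) else 0 with hFdef
  have hFeq : ∀ y ∈ U, F y = (P y.1 y.2 / y.1 ^ 2, Θ y.1 y.2) := fun y hy => if_pos hy
  have hFc1 : ContDiffOn ℝ 1 F U := by
    apply ContDiffOn.congr _ hFeq
    apply ContDiffOn.prodMk
    · exact hP.div ((contDiff_fst.pow 2).contDiffOn)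
        (fun y hy => pow_ne_zero 2 (ne_of_gt (hUsub hy)))
    · exact hΘ
  have hFd : ∀ y ∈ U, HasFDerivAt F (fderiv ℝ F y) y := fun y hy =>
    ((hFc1.contDiffAt (hU.mem_nhds hy)).differentiableAt one_ne_zero).hasFDerivAt
  have hsym : ∀ q ∈ U, ((fderiv ℝ F q) (1,0)).2 = ((fderiv ℝ F q) (0,1)).1 := by
    intro q hq
    have hqpos : 0 < q.1 := hUsub hq
    have hFq : HasFDerivAt F (fderiv ℝ F q) ((q.1, q.2) : ℝ × ℝ) := by
      rw [Prod.mk.eta]; exact hFd q hq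
    have hline1 : HasDerivAt (fun x => F (x, q.2)) (fderiv ℝ F q (1,0)) q.1 :=
      hFq.comp_hasDerivAt (f := fun x => (x, q.2)) q.1 ((hasDerivAt_id' (x := q.1)).prodMk (hasDerivAt_const q.1 q.2))
    have hline2 : HasDerivAt (fun y => F (q.1, y)) (fderiv ℝ F q (0,1)) q.2 :=
      hFq.comp_hasDerivAt q.2 ((hasDerivAt_const q.2 q.1).prodMk (hasDerivAt_id q.2))
    have hev1 : ∀ᶠ x in 𝓝 q.1, (x, q.2) ∈ U := by
      have hcont : Continuous fun x : ℝ => ((x : ℝ), q.2) := continuous_id.prodMk continuous_const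
      exact hcont.continuousAt.preimage_mem_nhds (by rw [Prod.mk.eta]; exact hU.mem_nhds hq)
    have hev2 : ∀ᶠ y in 𝓝 q.2, (q.1, y) ∈ U := by
      have hcont : Continuous fun y : ℝ => ((q.1 : ℝ), y) := continuous_const.prodMk continuous_id
      exact hcont.continuousAt.preimage_mem_nhds (by rw [Prod.mk.eta]; exact hU.mem_nhds hq)
    have hΘd : HasDerivAt (fun x => Θ x q.2) ((fderiv ℝ F q (1,0)).2) q.1 := by
      apply (hasFDerivAt_snd.comp_hasDerivAt q.1 hline1).congr_of_eventuallyEq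
      · filter_upwards [hev1] with x hx
        simp [hFeq (x, q.2) hx]
    have hPd : HasDerivAt (fun y => P q.1 y / q.1 ^ 2) ((fderiv ℝ F q (0,1)).1) q.2 := by
      apply (hasFDerivAt_fst.comp_hasDerivAt q.2 hline2).congr_of_eventuallyEq
      · filter_upwards [hev2] with y hy
        simp [hFeq (q.1, y) hy]
    have hP2 : HasDerivAt (fun y => P q.1 y) (q.1 ^ 2 * (fderiv ℝ F q (0,1)).1) q.2 := by
      have h2 := hPd.const_mul (q.1 ^ 2)
      have hfun : (fun y => q.1 ^ 2 * (P q.1 y / q.1 ^ 2)) = fun y => P q.1 y := by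
        funext y; field_simp
      rwa [hfun] at h2
    have e1 : pderivR Θ q.1 q.2 = (fderiv ℝ F q (1,0)).2 := hΘd.deriv
    have e2 : pderivS P q.1 q.2 = q.1 ^ 2 * (fderiv ℝ F q (0,1)).1 := hP2.deriv
    have h3 : q.1 ^ 2 * (fderiv ℝ F q (0,1)).1 = q.1 ^ 2 * (fderiv ℝ F q (1,0)).2 := by
      rw [← e2, hLag q hq, e1]
    exact (mul_left_cancel₀ (pow_ne_zero 2 hqpos.ne') h3).symm
  set ε' : ℝ × ℝ → ℝ :=
    fun x => ∫ t in (0:ℝ)..1, dotL (F (c + t • (x - c))) (x - c) with hε'def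
  have hmain : ∀ q ∈ U, HasFDerivAt ε' (dotL (F q)) q := fun q hq =>
    poincare hU hconv hFc1 hsym hc hq
  refine ⟨fun a b => ε' (a, b), ?_, ?_⟩
  · have huncurry : Function.uncurry (fun a b => ε' (a, b)) = ε' := by
      funext p
      simp [Function.uncurry]
    rw [huncurry]
    have h2 : (2 : WithTop ℕ∞) = 1 + 1 := by norm_num
    rw [h2, contDiffOn_succ_iff_fderiv_of_isOpen hU]
    refine ⟨fun q hq => (hmain q hq).differentiableAt.differentiableWithinAt, ?_, ?_⟩
    · intro h; simp at h
    · exact (dotL.contDiff.comp_contDiffOn hFc1).congr (fun q hq => (hmain q hq).fderiv)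
  · intro q hq
    have hFq : HasFDerivAt ε' (dotL (F q)) ((q.1, q.2) : ℝ × ℝ) := by
      rw [Prod.mk.eta]; exact hmain q hq
    constructor
    · show deriv (fun y => ε' (q.1, y)) q.2 = Θ q.1 q.2
      have hd : HasDerivAt (fun y => ε' (q.1, y)) (dotL (F q) ((0:ℝ), (1:ℝ))) q.2 :=
        hFq.comp_hasDerivAt q.2 ((hasDerivAt_const q.2 q.1).prodMk (hasDerivAt_id q.2))
      rw [hd.deriv]
      simp [hFeq q hq]
    · show deriv (fun x => ε' (x, q.2)) q.1 = P q.1 q.2 / q.1 ^ 2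
      have hd : HasDerivAt (fun x => ε' (x, q.2)) (dotL (F q) ((1:ℝ), (0:ℝ))) q.1 :=
        hFq.comp_hasDerivAt (f := fun x => (x, q.2)) q.1 ((hasDerivAt_id' (x := q.1)).prodMk (hasDerivAt_const q.1 q.2))
      rw [hd.deriv]
      simp [hFeq q hq]
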